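/- Fix a slot in which each active packet sends independently with probability at most 1/2, and let Con denote the sum of the sending probabilities. Then the probability that exactly one packet sends is at least Con/e^{2·Con}. -/
import Mathlib

lemma exp_neg_two_le (x : ℝ) (h0 : 0 ≤ x) (h2 : x ≤ 1/2) :
    Real.exp (-(2*x)) ≤ 1 - x := by
  have h1 : (1:ℝ) + 2*x ≤ Real.exp (2*x) := by
    have := Real.add_one_le_exp (2*x); linarith
  have hpos : (0:ℝ) < 1 + 2*x := by linarith
  have h3 : Real.exp (-(2*x)) ≤ 1 / (1 + 2*x) := by
    rw [Real.exp_neg, one_div]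
    exact inv_anti₀ hpos h1
  have h4 : 1 / (1 + 2*x) ≤ 1 - x := by
    rw [div_le_iff₀ hpos]; nlinarith
  linarith

/-- Bender et al.: if each of `n` packets sends independently with probability
`pᵢ ∈ [0, 1/2]` and `Con = ∑ pᵢ`, then the probability of exactly one sender,
`∑ᵢ pᵢ ∏_{j≠i}(1-pⱼ)`, is at least `Con / e^{2·Con}`. -/
theorem success_prob_lower_bound (n : ℕ) (p : Fin n → ℝ)
    (hp : ∀ i, p i ∈ Set.Icc (0 : ℝ) (1 / 2)) :
    (∑ i, p i) / Real.exp (2 * ∑ i, p i) ≤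
      ∑ i, p i * ∏ j ∈ Finset.univ.erase i, (1 - p j) := by
  have hnn : ∀ j, (0:ℝ) ≤ 1 - p j := fun j => by have := (hp j).2; linarith
  have hle1 : ∀ j, (1:ℝ) - p j ≤ 1 := fun j => by have := (hp j).1; linarith
  -- Step 1: full product ≤ erased product
  have step1 : (∑ i, p i) * ∏ j, (1 - p j) ≤
      ∑ i, p i * ∏ j ∈ Finset.univ.erase i, (1 - p j) := by
    rw [Finset.sum_mul]
    apply Finset.sum_le_sum
    intro i _
    have hprod : ∏ j, (1 - p j) = (1 - p i) * ∏ j ∈ Finset.univ.erase i, (1 - p j) :=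
      (Finset.mul_prod_erase Finset.univ _ (Finset.mem_univ i)).symm
    rw [hprod]
    have hpe : (0:ℝ) ≤ ∏ j ∈ Finset.univ.erase i, (1 - p j) :=
      Finset.prod_nonneg fun j _ => hnn j
    exact mul_le_mul_of_nonneg_left (mul_le_of_le_one_left hpe (hle1 i)) (hp i).1
  -- Step 2: exp bound
  have step2 : Real.exp (-(2 * ∑ i, p i)) ≤ ∏ j, (1 - p j) := by
    have : Real.exp (-(2 * ∑ i, p i)) = ∏ j, Real.exp (-(2 * p j)) := by
      rw [← Real.exp_sum]
      congr 1
      rw [Finset.mul_sum]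
      simp [Finset.sum_neg_distrib]
    rw [this]
    apply Finset.prod_le_prod (fun j _ => (Real.exp_pos _).le)
    intro j _
    exact exp_neg_two_le (p j) (hp j).1 (hp j).2
  have hCon : (0:ℝ) ≤ ∑ i, p i := Finset.sum_nonneg fun i _ => (hp i).1
  calc (∑ i, p i) / Real.exp (2 * ∑ i, p i)
      = (∑ i, p i) * Real.exp (-(2 * ∑ i, p i)) := by
        rw [Real.exp_neg, div_eq_mul_inv]
    _ ≤ (∑ i, p i) * ∏ j, (1 - p j) := by
        exact mul_le_mul_of_nonneg_left step2 hCon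
    _ ≤ _ := step1
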